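/- Let {a_n}_{n≥1} be a nonnegative real sequence which is a mean value bounded variation sequence (MVBVS). If the sine series ∑_{n=1}^∞ a_n sin(nx) converges uniformly on ℝ (i.e., its partial sums S_n(x) = ∑_{k=1}^n a_k sin(kx) converge uniformly), then lim_{n→∞} n·a_n = 0. -/

import Mathlib

open Filter

section Aux
open Finset

-- Block sums tend to zero
lemma block_tendsto (a : ℕ → ℝ) (ha : ∀ n : ℕ, 1 ≤ n → 0 ≤ a n) (f : ℝ → ℝ)
    (hunif : TendstoUniformly
      (fun (n : ℕ) (x : ℝ) => ∑ k ∈ Finset.Icc 1 n, a k * Real.sin (k * x))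
      f atTop) :
    Tendsto (fun n : ℕ => ∑ k ∈ Finset.Icc n (2 * n), a k) atTop (nhds 0) := by
  rw [Metric.tendstoUniformly_iff] at hunif
  rw [Metric.tendsto_atTop]
  intro ε hε
  obtain ⟨N, hN⟩ := (hunif (ε / 4) (by linarith)).exists_forall_of_atTop
  refine ⟨N + 1, fun n hn => ?_⟩
  have hn1 : 1 ≤ n := le_trans (Nat.le_add_left 1 N) hn
  have hnR : (1 : ℝ) ≤ (n : ℝ) := by exact_mod_cast hn1
  set x : ℝ := Real.pi / (4 * n) with hx
  have hπ := Real.pi_pos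
  have hxpos : 0 < x := by positivity
  -- the block sum as difference of partial sums
  have hsplit : (∑ k ∈ Finset.Icc 1 (2 * n), a k * Real.sin (k * x)) -
      (∑ k ∈ Finset.Icc 1 (n - 1), a k * Real.sin (k * x)) =
      ∑ k ∈ Finset.Icc n (2 * n), a k * Real.sin (k * x) := by
    have h1 : Finset.Icc 1 (2 * n) = Finset.Ioc 0 (2 * n) := Finset.Icc_add_one_left_eq_Ioc 0 _
    have h2 : Finset.Icc 1 (n - 1) = Finset.Ioc 0 (n - 1) := Finset.Icc_add_one_left_eq_Ioc 0 _
    have h3 : Finset.Icc n (2 * n) = Finset.Ioc (n - 1) (2 * n) := by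
      rw [← Finset.Icc_add_one_left_eq_Ioc, Nat.sub_add_cancel hn1]
    rw [h1, h2, h3, sub_eq_iff_eq_add, add_comm]
    exact (Finset.sum_Ioc_consecutive _ (Nat.zero_le _) (by omega)).symm
  -- lower bound: each sin ≥ 1/2
  have hsin : ∀ k ∈ Finset.Icc n (2 * n), a k * (1 / 2) ≤ a k * Real.sin (k * x) := by
    intro k hk
    rw [Finset.mem_Icc] at hk
    have hk1 : 1 ≤ k := le_trans hn1 hk.1
    refine mul_le_mul_of_nonneg_left ?_ (ha k hk1)
    have hxeq : (k : ℝ) * x = ((k : ℝ) * Real.pi) / (4 * n) := by rw [hx]; ring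
    have hkx_le : (k : ℝ) * x ≤ Real.pi / 2 := by
      rw [hxeq, div_le_div_iff₀ (by positivity) (by norm_num)]
      have : (k : ℝ) ≤ 2 * n := by exact_mod_cast hk.2
      nlinarith
    have hkx_ge : Real.pi / 4 ≤ (k : ℝ) * x := by
      rw [hxeq, div_le_div_iff₀ (by norm_num) (by positivity)]
      have : (n : ℝ) ≤ k := by exact_mod_cast hk.1
      nlinarith
    have hms := Real.mul_le_sin (x := (k : ℝ) * x) (by positivity) hkx_le
    calc (1 : ℝ) / 2 = 2 / Real.pi * (Real.pi / 4) := by field_simp; ring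
      _ ≤ 2 / Real.pi * ((k : ℝ) * x) := by gcongr
      _ ≤ Real.sin ((k : ℝ) * x) := hms
  have hlo : (∑ k ∈ Finset.Icc n (2 * n), a k) * (1 / 2) ≤
      ∑ k ∈ Finset.Icc n (2 * n), a k * Real.sin (k * x) := by
    rw [Finset.sum_mul]
    exact Finset.sum_le_sum hsin
  have h2n : N ≤ 2 * n := by omega
  have hn1' : N ≤ n - 1 := by omega
  have hd1 := hN (2 * n) h2n x
  have hd2 := hN (n - 1) hn1' x
  rw [Real.dist_eq] at hd1 hd2
  have hB : 0 ≤ ∑ k ∈ Finset.Icc n (2 * n), a k :=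
    Finset.sum_nonneg fun k hk => ha k (le_trans hn1 (Finset.mem_Icc.mp hk).1)
  rw [Real.dist_eq, sub_zero, abs_of_nonneg hB]
  rw [abs_lt] at hd1 hd2
  linarith [hd1.1, hd1.2, hd2.1, hd2.2, hlo, hsplit]

lemma iter_tendsto (a : ℕ → ℝ) (ha : ∀ n : ℕ, 1 ≤ n → 0 ≤ a n)
    (hB : Tendsto (fun n : ℕ => ∑ k ∈ Finset.Icc n (2 * n), a k) atTop (nhds 0)) (j : ℕ) :
    Tendsto (fun m : ℕ => ∑ k ∈ Finset.Icc m (2 ^ j * m), a k) atTop (nhds 0) := by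
  induction j with
  | zero =>
    simp only [pow_zero, one_mul, Finset.Icc_self, Finset.sum_singleton]
    refine squeeze_zero' (eventually_atTop.2 ⟨1, fun m hm => ha m hm⟩)
      (eventually_atTop.2 ⟨1, fun m hm => ?_⟩) hB
    exact Finset.single_le_sum (fun k hk => ha k (le_trans hm (Finset.mem_Icc.mp hk).1))
      (Finset.mem_Icc.mpr ⟨le_refl m, by omega⟩)
  | succ j ih =>
    have htend : Tendsto (fun m : ℕ => 2 ^ j * m) atTop atTop := by
      refine tendsto_atTop_mono (fun m => ?_) tendsto_id
      calc m = 1 * m := (one_mul m).symm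
        _ ≤ 2 ^ j * m := Nat.mul_le_mul_right m (Nat.one_le_pow j 2 (by norm_num))
    have key : ∀ m : ℕ, 1 ≤ m → ∑ k ∈ Finset.Icc m (2 ^ (j+1) * m), a k ≤
        (∑ k ∈ Finset.Icc m (2 ^ j * m), a k) +
        ∑ k ∈ Finset.Icc (2 ^ j * m) (2 * (2 ^ j * m)), a k := by
      intro m hm
      set N := 2 ^ j * m with hN
      have hmN : m ≤ N := by
        calc m = 1 * m := (one_mul m).symm
          _ ≤ 2 ^ j * m := Nat.mul_le_mul_right m (Nat.one_le_pow j 2 (by norm_num))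
      have h2N : 2 ^ (j+1) * m = 2 * N := by rw [hN, pow_succ]; ring
      calc ∑ k ∈ Finset.Icc m (2 ^ (j+1) * m), a k
          = (∑ k ∈ Finset.Ico m (N+1), a k) + ∑ k ∈ Finset.Ico (N+1) (2*N+1), a k := by
            rw [show Finset.Icc m (2 ^ (j+1) * m) = Finset.Ico m (2*N+1) from by
              rw [Finset.Ico_add_one_right_eq_Icc, h2N]]
            exact (Finset.sum_Ico_consecutive _ (by omega) (by omega)).symm
        _ ≤ (∑ k ∈ Finset.Icc m N, a k) + ∑ k ∈ Finset.Icc N (2*N), a k := by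
            refine add_le_add (le_of_eq (by rw [Finset.Ico_add_one_right_eq_Icc])) ?_
            refine Finset.sum_le_sum_of_subset_of_nonneg ?_ fun k hk _ => ?_
            · rw [Finset.Ico_add_one_right_eq_Icc]
              exact Finset.Icc_subset_Icc (by omega) le_rfl
            · exact ha k (le_trans (le_trans hm hmN) (Finset.mem_Icc.mp hk).1)
    refine squeeze_zero' (eventually_atTop.2 ⟨1, fun m hm =>
        Finset.sum_nonneg fun k hk => ha k (le_trans hm (Finset.mem_Icc.mp hk).1)⟩)
      (eventually_atTop.2 ⟨1, fun m hm => key m hm⟩) ?_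
    simpa using ih.add (hB.comp htend)


end Aux

/-- A nonnegative sequence (indexed from 1) is a mean value bounded variation sequence. -/
def IsMVBVS (a : ℕ → ℝ) : Prop :=
  ∃ lam : ℝ, 2 ≤ lam ∧ ∃ C : ℝ, 0 < C ∧ ∀ n : ℕ, 1 ≤ n →
    ∑ k ∈ Finset.Icc n (2 * n), |a k - a (k + 1)| ≤
      (C / n) * ∑ k ∈ Finset.Icc ⌊(n : ℝ) / lam⌋₊ ⌊lam * n⌋₊, a k

/-- If a nonnegative MVBV sequence has a uniformly convergent sine series,
then `n·aₙ → 0`. -/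
theorem stmt5 (a : ℕ → ℝ) (ha : ∀ n : ℕ, 1 ≤ n → 0 ≤ a n)
    (hMVBV : IsMVBVS a) (f : ℝ → ℝ)
    (hunif : TendstoUniformly
      (fun (n : ℕ) (x : ℝ) => ∑ k ∈ Finset.Icc 1 n, a k * Real.sin (k * x))
      f atTop) :
    Tendsto (fun n : ℕ => (n : ℝ) * a n) atTop (nhds 0) := by
  obtain ⟨lam, hlam, C, hC, hMV⟩ := hMVBV
  have hlam0 : (0:ℝ) < lam := by linarith
  have hB := block_tendsto a ha f hunif
  obtain ⟨j, hj⟩ := pow_unbounded_of_one_lt (2 * lam ^ 2) (one_lt_two (α := ℝ))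
  have hG := iter_tendsto a ha hB j
  have hfl : Tendsto (fun n : ℕ => ⌊(n : ℝ) / lam⌋₊) atTop atTop :=
    tendsto_nat_floor_atTop.comp (tendsto_natCast_atTop_atTop.atTop_div_const hlam0)
  -- for large n the window is controlled
  set W : ℕ → ℝ := fun n => ∑ k ∈ Finset.Icc ⌊(n : ℝ) / lam⌋₊ ⌊lam * n⌋₊, a k with hWdef
  have hwin : ∀ n : ℕ, 2 * lam ≤ (n : ℝ) →
      (1 ≤ ⌊(n : ℝ) / lam⌋₊ ∧ ⌊lam * (n:ℝ)⌋₊ ≤ 2 ^ j * ⌊(n : ℝ) / lam⌋₊) := by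
    intro n hn
    set m := ⌊(n : ℝ) / lam⌋₊ with hm
    have hm1 : 1 ≤ m := by
      apply Nat.le_floor
      rw [Nat.cast_one, le_div_iff₀ hlam0]
      linarith
    refine ⟨hm1, ?_⟩
    have hnm : (n : ℝ) < lam * m + lam := by
      have := Nat.lt_floor_add_one ((n : ℝ) / lam)
      rw [div_lt_iff₀ hlam0] at this
      calc (n:ℝ) < (↑m + 1) * lam := this
        _ = lam * m + lam := by ring
    have hm0 : (0:ℝ) ≤ (m:ℝ) := Nat.cast_nonneg _
    have h2j : 2 * lam ^ 2 * (m:ℝ) ≤ (2:ℝ) ^ j * m :=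
      mul_le_mul_of_nonneg_right (le_of_lt hj) hm0
    have h3 : lam * (n:ℝ) ≤ 2 * lam ^ 2 * m := by
      nlinarith [mul_nonneg hlam0.le (by linarith : (0:ℝ) ≤ lam * m + lam - n),
        mul_nonneg hlam0.le (by linarith : (0:ℝ) ≤ (n:ℝ) - 2 * lam)]
    have h4 : (⌊lam * (n:ℝ)⌋₊ : ℝ) ≤ ((2 ^ j * m : ℕ) : ℝ) := by
      push_cast
      calc (⌊lam * (n:ℝ)⌋₊ : ℝ) ≤ lam * n := Nat.floor_le (by positivity)
        _ ≤ 2 * lam ^ 2 * m := h3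
        _ ≤ (2:ℝ) ^ j * m := h2j
    exact_mod_cast h4
  have hW : Tendsto W atTop (nhds 0) := by
    refine squeeze_zero' ?_ ?_ (hG.comp hfl)
    · filter_upwards [eventually_ge_atTop ⌈2 * lam⌉₊] with n hn
      have hn' : 2 * lam ≤ (n : ℝ) := by
        calc 2 * lam ≤ (⌈2 * lam⌉₊ : ℝ) := Nat.le_ceil _
          _ ≤ (n : ℝ) := by exact_mod_cast hn
      exact Finset.sum_nonneg fun k hk =>
        ha k (le_trans (hwin n hn').1 (Finset.mem_Icc.mp hk).1)
    · filter_upwards [eventually_ge_atTop ⌈2 * lam⌉₊] with n hn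
      have hn' : 2 * lam ≤ (n : ℝ) := by
        calc 2 * lam ≤ (⌈2 * lam⌉₊ : ℝ) := Nat.le_ceil _
          _ ≤ (n : ℝ) := by exact_mod_cast hn
      refine Finset.sum_le_sum_of_subset_of_nonneg
        (Finset.Icc_subset_Icc le_rfl (hwin n hn').2) fun k hk _ =>
        ha k (le_trans (hwin n hn').1 (Finset.mem_Icc.mp hk).1)
  -- the main estimate
  have key : ∀ n : ℕ, 1 ≤ n → (n : ℝ) * a n ≤
      (∑ k ∈ Finset.Icc n (2 * n), a k) + 2 * C * W n := by
    intro n hn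
    have hnR : (1:ℝ) ≤ (n : ℝ) := by exact_mod_cast hn
    set V : ℝ := ∑ k ∈ Finset.Icc n (2 * n), |a k - a (k + 1)| with hV
    have hstep : ∀ k ∈ Finset.Icc n (2 * n), a n ≤ a k + V := by
      intro k hk
      rw [Finset.mem_Icc] at hk
      have tel : a k - a n = ∑ i ∈ Finset.Ico n k, (a (i+1) - a i) := by
        rw [Finset.sum_Ico_eq_sub _ hk.1, Finset.sum_range_sub, Finset.sum_range_sub]
        ring
      have : a n - a k ≤ ∑ i ∈ Finset.Ico n k, |a i - a (i+1)| := by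
        have h1 : a n - a k = ∑ i ∈ Finset.Ico n k, (a i - a (i+1)) := by
          rw [show (∑ i ∈ Finset.Ico n k, (a i - a (i+1))) =
            -(∑ i ∈ Finset.Ico n k, (a (i+1) - a i)) from by
              rw [← Finset.sum_neg_distrib]; exact Finset.sum_congr rfl fun i _ => by ring,
            ← tel]; ring
        rw [h1]
        exact Finset.sum_le_sum fun i _ => le_abs_self _
      have h2 : (∑ i ∈ Finset.Ico n k, |a i - a (i+1)|) ≤ V := by
        refine Finset.sum_le_sum_of_subset_of_nonneg ?_ fun i _ _ => abs_nonneg _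
        intro i hi
        rw [Finset.mem_Ico] at hi
        rw [Finset.mem_Icc]
        omega
      linarith
    have hcard : (Finset.Icc n (2 * n)).card = n + 1 := by
      rw [Nat.card_Icc]; omega
    have hsum : (↑(n + 1) : ℝ) * a n ≤ (∑ k ∈ Finset.Icc n (2 * n), a k) + (n + 1 : ℝ) * V := by
      have := Finset.sum_le_sum hstep
      rw [Finset.sum_const, hcard, Finset.sum_add_distrib, Finset.sum_const, hcard] at this
      push_cast at this ⊢
      simpa [nsmul_eq_mul] using this
    have hVW : V ≤ (C / n) * W n := hMV n hn
    have hV0 : 0 ≤ V := Finset.sum_nonneg fun k _ => abs_nonneg _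
    have hnpos : (0:ℝ) < n := by linarith
    have h5 : ((n:ℝ) + 1) * V ≤ 2 * C * W n := by
      calc ((n:ℝ) + 1) * V ≤ 2 * (n:ℝ) * V := by nlinarith
        _ ≤ 2 * (n:ℝ) * ((C / n) * W n) := by
            refine mul_le_mul_of_nonneg_left hVW (by positivity)
        _ = 2 * C * W n := by field_simp
    have han := ha n hn
    push_cast at hsum
    nlinarith
  refine squeeze_zero' (eventually_atTop.2 ⟨1, fun n hn =>
      mul_nonneg (Nat.cast_nonneg _) (ha n hn)⟩)
    (eventually_atTop.2 ⟨1, fun n hn => key n hn⟩) ?_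
  have := hB.add (hW.const_mul (2 * C))
  simpa using this
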